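/- Let K be a field, n ≥ 2 an integer, X_1, …, X_n ∈ K, and let s : K × K → K and t, u : K → K be functions such that for every nonempty subset S ⊆ {1,…,n} the element 1 − ∏_{j∈S} u(X_j) is nonzero. For any finite tuple (Y_1,…,Y_p) of elements of K (satisfying the analogous nonvanishing conditions) define P(Y_1,…,Y_p) = Σ_{σ∈S_p} sgn(σ) · ∏_{1≤i<j≤p} s(Y_{σ(i)}, Y_{σ(j)}) · ∏_{i=1}^p t(Y_{σ(i)})^{i−1} · ∏_{i=1}^p (1 − ∏_{j=i}^p u(Y_{σ(j)}))^{−1}. Then P(X_1,…,X_n) = Σ_{k=1}^n (−1)^{k−1} · (1 − ∏_{j=1}^n u(X_j))^{−1} · P(X_1,…,X_{k−1},X_{k+1},…,X_n) · ∏_{1≤j≤n, j≠k} s(X_k, X_j) · t(X_j). -/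

import Mathlib

noncomputable section

/-- The antisymmetrized expression
`P(Y_1,…,Y_p) = Σ_σ sgn(σ) ∏_{i<j} s(Y_{σ(i)},Y_{σ(j)}) ∏_i t(Y_{σ(i)})^{i−1}
∏_i (1 − ∏_{j=i}^p u(Y_{σ(j)}))⁻¹`. -/
def Pfun {K : Type*} [Field K] (s : K → K → K) (t u : K → K) {p : ℕ}
    (Y : Fin p → K) : K :=
  ∑ σ : Equiv.Perm (Fin p), ((Equiv.Perm.sign σ : ℤ) : K) *
    ((∏ i : Fin p, ∏ j ∈ Finset.Ioi i, s (Y (σ i)) (Y (σ j))) *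
      (∏ i : Fin p, t (Y (σ i)) ^ (i : ℕ)) *
      ∏ i : Fin p, (1 - ∏ j ∈ Finset.Ici i, u (Y (σ j)))⁻¹)

open Finset Equiv Equiv.Perm

lemma decomposeFin_fst {n : ℕ} (x : Perm (Fin (n+1))) :
    (Equiv.Perm.decomposeFin x).1 = x 0 := by
  conv_rhs => rw [← Equiv.Perm.decomposeFin.symm_apply_apply x]
  exact (Equiv.Perm.decomposeFin_symm_apply_zero (Equiv.Perm.decomposeFin x).1
    (Equiv.Perm.decomposeFin x).2).symm

/-- reindexing equiv -/
def permEquiv (n : ℕ) : Fin (n+1) × Perm (Fin n) ≃ Perm (Fin (n+1)) where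
  toFun p := (Equiv.Perm.decomposeFin.symm (0, p.2)).trans p.1.cycleRange.symm
  invFun σ := (σ 0, (Equiv.Perm.decomposeFin (σ.trans (σ 0).cycleRange)).2)
  left_inv := by
    rintro ⟨k, τ⟩
    have h0 : ((Equiv.Perm.decomposeFin.symm (0, τ)).trans k.cycleRange.symm) 0 = k := by
      simp
    ext1
    · exact h0
    · simp only [h0, Equiv.trans_assoc, Equiv.symm_trans_self, Equiv.trans_refl,
        Equiv.apply_symm_apply]
  right_inv := by
    intro σ
    have h2 : (Equiv.Perm.decomposeFin (σ.trans (σ 0).cycleRange)).1 = 0 := by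
      rw [decomposeFin_fst]; simp [Fin.cycleRange_self]
    have h3 : Equiv.Perm.decomposeFin (σ.trans (σ 0).cycleRange) =
        (0, (Equiv.Perm.decomposeFin (σ.trans (σ 0).cycleRange)).2) := Prod.ext h2 rfl
    simp only
    rw [← h3, Equiv.symm_apply_apply, Equiv.trans_assoc,
      Equiv.self_trans_symm, Equiv.trans_refl]

@[simp] lemma permEquiv_zero {n : ℕ} (k : Fin (n+1)) (τ : Perm (Fin n)) :
    permEquiv n (k, τ) 0 = k := by
  simp [permEquiv]

@[simp] lemma permEquiv_succ {n : ℕ} (k : Fin (n+1)) (τ : Perm (Fin n)) (i : Fin n) :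
    permEquiv n (k, τ) i.succ = k.succAbove (τ i) := by
  simp [permEquiv, Equiv.Perm.decomposeFin_symm_apply_succ]

lemma permEquiv_sign {n : ℕ} (k : Fin (n+1)) (τ : Perm (Fin n)) :
    Equiv.Perm.sign (permEquiv n (k, τ)) = (-1) ^ (k : ℕ) * Equiv.Perm.sign τ := by
  have : (permEquiv n (k, τ) : Perm (Fin (n+1))) =
      (k.cycleRange)⁻¹ * Equiv.Perm.decomposeFin.symm (0, τ) := rfl
  rw [this, map_mul, map_inv, Fin.sign_cycleRange, Equiv.Perm.decomposeFin.symm_sign]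
  simp [mul_comm]

lemma Ici_zero_fin (n : ℕ) : Finset.Ici (0 : Fin (n+1)) = univ := by
  ext j; simp [Fin.zero_le]

lemma prod_Ici_succ' {M : Type*} [CommMonoid M] {n : ℕ} (v : Fin (n+1) → M) (i : Fin n) :
    ∏ j ∈ Finset.Ici i.succ, v j = ∏ j ∈ Finset.Ici i, v j.succ := by
  rw [Finset.Ici_eq_cons_Ioi, Finset.Ici_eq_cons_Ioi, Finset.prod_cons, Finset.prod_cons,
    Fin.prod_Ioi_succ]

lemma prod_erase_eq_succAbove {M : Type*} [CommMonoid M] {n : ℕ} (k : Fin (n+1))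
    (f : Fin (n+1) → M) :
    ∏ j ∈ Finset.univ.erase k, f j = ∏ i : Fin n, f (k.succAbove i) := by
  rw [show Finset.univ.erase k = Finset.univ.map k.succAboveEmb by
    ext j
    simp only [Finset.mem_erase, Finset.mem_univ, and_true, Finset.mem_map,
      Fin.coe_succAboveEmb, true_and]
    rw [Fin.exists_succAbove_eq_iff]]
  rw [Finset.prod_map]
  rfl

/-- The recursion satisfied by `P`: here the tuple has length `n + 1 ≥ 2`. -/
theorem stmt_11 {K : Type*} [Field K] (n : ℕ) (hn : 1 ≤ n)
    (X : Fin (n + 1) → K) (s : K → K → K) (t u : K → K)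
    (hu : ∀ S : Finset (Fin (n + 1)), S.Nonempty → (1 - ∏ j ∈ S, u (X j)) ≠ 0) :
    Pfun s t u X =
      ∑ k : Fin (n + 1), (-1 : K) ^ (k : ℕ) *
        (1 - ∏ j : Fin (n + 1), u (X j))⁻¹ *
        Pfun s t u (X ∘ k.succAbove) *
        ∏ j ∈ Finset.univ.erase k, s (X k) (X j) * t (X j) := by
  simp only [Pfun]
  rw [← Equiv.sum_comp (permEquiv n)]
  rw [Fintype.sum_prod_type]
  refine Finset.sum_congr rfl fun k _ => ?_
  rw [Finset.mul_sum, Finset.sum_mul]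
  refine Finset.sum_congr rfl fun τ _ => ?_
  have hY : ∀ i : Fin n, X (permEquiv n (k, τ) i.succ) = (X ∘ k.succAbove) (τ i) := fun i => by
    rw [permEquiv_succ]; rfl
  have h0 : X (permEquiv n (k, τ) 0) = X k := by rw [permEquiv_zero]
  have hsign : ((Equiv.Perm.sign (permEquiv n (k, τ)) : ℤ) : K)
      = (-1 : K) ^ (k : ℕ) * ((Equiv.Perm.sign τ : ℤ) : K) := by
    rw [permEquiv_sign]; push_cast; ring
  have hA : (∏ i : Fin (n+1), ∏ j ∈ Finset.Ioi i,
        s (X (permEquiv n (k, τ) i)) (X (permEquiv n (k, τ) j)))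
      = (∏ j : Fin n, s (X k) ((X ∘ k.succAbove) j)) *
        ∏ i : Fin n, ∏ j ∈ Finset.Ioi i,
          s ((X ∘ k.succAbove) (τ i)) ((X ∘ k.succAbove) (τ j)) := by
    rw [Fin.prod_univ_succ, Fin.prod_Ioi_zero]
    simp_rw [Fin.prod_Ioi_succ]
    simp only [h0, hY]
    rw [Equiv.prod_comp τ (fun j => s (X k) ((X ∘ k.succAbove) j))]
  have hB : (∏ i : Fin (n+1), t (X (permEquiv n (k, τ) i)) ^ (i : ℕ))
      = (∏ j : Fin n, t ((X ∘ k.succAbove) j)) *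
        ∏ i : Fin n, t ((X ∘ k.succAbove) (τ i)) ^ (i : ℕ) := by
    rw [Fin.prod_univ_succ]
    simp only [Fin.val_zero, pow_zero, one_mul, Fin.val_succ, hY]
    simp_rw [pow_succ]
    rw [Finset.prod_mul_distrib, Equiv.prod_comp τ (fun j => t ((X ∘ k.succAbove) j))]
    ring
  have hC : (∏ i : Fin (n+1), (1 - ∏ j ∈ Finset.Ici i, u (X (permEquiv n (k, τ) j)))⁻¹)
      = (1 - ∏ j : Fin (n+1), u (X j))⁻¹ *
        ∏ i : Fin n, (1 - ∏ j ∈ Finset.Ici i, u ((X ∘ k.succAbove) (τ j)))⁻¹ := by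
    rw [Fin.prod_univ_succ]
    congr 1
    · rw [Ici_zero_fin, Equiv.prod_comp (permEquiv n (k, τ)) (fun j => u (X j))]
    · refine Finset.prod_congr rfl fun i _ => ?_
      rw [prod_Ici_succ']
      have hp : ∏ j ∈ Finset.Ici i, u (X (permEquiv n (k, τ) j.succ))
          = ∏ j ∈ Finset.Ici i, u ((X ∘ k.succAbove) (τ j)) :=
        Finset.prod_congr rfl fun j _ => by rw [hY]
      rw [hp]
  rw [hA, hB, hC, hsign,
    prod_erase_eq_succAbove k (fun j => s (X k) (X j) * t (X j)),
    Finset.prod_mul_distrib]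
  simp only [Function.comp_apply]
  ring
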